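/- arXiv:2311.02295 — 2 statements merged into one kernel-verified Lean document; each statement's English description precedes it below -/
import Mathlib

section
/- Let (w_n)_{n∈ℤ} and (v_n)_{n∈ℤ} be sequences of complex numbers with |w_n| = |v_n| = 1 for all n, let (d_n)_{n∈ℤ} be a bounded sequence of complex numbers with XT₁ ≠ T₀X, and let T = T(w_n, v_n, d_n) be the associated bounded block-shift operator on H ⊕ H. Suppose there exist a bijection g : ℤ → ℤ and N ∈ ℤ such that the numbers |d_{n+1}v_n − d_n w_n|², n > N, are pairwise distinct, and |d_{n+1}v_n − d_n w_n|² = |d_{g(n)+1}v_{g(n)} − d_{g(n)}w_{g(n)}|² for every n ∈ ℤ. If for every n ∈ ℤ at least one of the following holds, where c_n = conj(d_n)·conj(w_n)·v_n: (1) d_{n+1}c_n + d_n c_{n−1} − d_{n+1}·conj(w_n)·v_n·c_{n−1} is not a real number; (2) (conj(d_{n+1})·w_n·v_n − conj(d_n))·|d_n v_{n−1} − d_{n−1}w_{n−1}|² ≠ (conj(d_{n−1})·conj(w_{n−1})·v_{n−1} − conj(d_n))·|d_{n+1}v_n − d_n w_n|²; then T is irreducible. -/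
noncomputable section

open Complex Metric

/-- `ℓ²(ℤ)` over `ℂ`. -/
abbrev Hl : Type := lp (fun _ : ℤ => ℂ) 2

/-- The standard orthonormal basis of `ℓ²(ℤ)`. -/
def eb (n : ℤ) : Hl := lp.single 2 n 1

/-- The Hilbert space direct sum `H ⊕ H`. -/
abbrev H2 : Type := WithLp 2 (Hl × Hl)

/-- A bounded operator on a Hilbert space is irreducible if the only closed subspaces
invariant under both it and its adjoint are `⊥` and `⊤`. -/
def IsIrreducibleOp {E : Type*} [NormedAddCommGroup E] [InnerProductSpace ℂ E] [CompleteSpace E]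
    (A : E →L[ℂ] E) : Prop :=
  ∀ K : Submodule ℂ E, IsClosed (K : Set E) →
    (∀ x ∈ K, A x ∈ K) → (∀ x ∈ K, ContinuousLinearMap.adjoint A x ∈ K) →
    K = ⊥ ∨ K = ⊤

/-- The block operator `(x, y) ↦ (T₀ x + (X T₁ − T₀ X) y, T₁ y)` on the Hilbert space
direct sum `H₀ ⊕ H₁`. -/
def blockT2 {H0 H1 : Type*} [NormedAddCommGroup H0] [NormedSpace ℂ H0]
    [NormedAddCommGroup H1] [NormedSpace ℂ H1]
    (T0 : H0 →L[ℂ] H0) (T1 : H1 →L[ℂ] H1) (X : H1 →L[ℂ] H0) :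
    WithLp 2 (H0 × H1) →L[ℂ] WithLp 2 (H0 × H1) :=
  let E := WithLp.prodContinuousLinearEquiv 2 ℂ H0 H1
  (E.symm.toContinuousLinearMap).comp
    ((((T0.comp (ContinuousLinearMap.fst ℂ H0 H1)) +
        ((X.comp T1 - T0.comp X).comp (ContinuousLinearMap.snd ℂ H0 H1))).prod
      (T1.comp (ContinuousLinearMap.snd ℂ H0 H1))).comp E.toContinuousLinearMap)

/-- The block operator `T(wₙ, vₙ, dₙ)` on `ℓ²(ℤ) ⊕ ℓ²(ℤ)`. -/
def blockT (T0 T1 X : Hl →L[ℂ] Hl) : H2 →L[ℂ] H2 := blockT2 T0 T1 X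
/-- `|d_{n+1} vₙ − dₙ wₙ|²`, the quantity determining the singular values of `Tₙ`. -/
def sqSeq (w v d : ℤ → ℂ) (n : ℤ) : ℝ := ‖d (n + 1) * v n - d n * w n‖ ^ 2

/-- `cₙ = conj(dₙ)·conj(wₙ)·vₙ`. -/
def cSeq' (w v d : ℤ → ℂ) (n : ℤ) : ℂ :=
  starRingEnd ℂ (d n) * starRingEnd ℂ (w n) * v n
namespace IrredAux

local notation "⟪" x ", " y "⟫" => @inner ℂ _ _ x y
local notation "cj" => starRingEnd ℂ

lemma eb_apply (n m : ℤ) : (eb n) m = if m = n then 1 else 0 := by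
  by_cases h : m = n
  · subst h; simp [eb, lp.single_apply_self]
  · simp [eb, lp.single_apply_ne _ _ _ h, h]

lemma inner_eb_left (m : ℤ) (f : Hl) : ⟪eb m, f⟫ = f m := by
  rw [eb, lp.inner_single_left]
  simp [RCLike.inner_apply]

lemma hasSum_eb (f : Hl) : HasSum (fun n => f n • eb n) f := by
  have h := lp.hasSum_single (E := fun _ : ℤ => ℂ) (p := 2) (by norm_num) f
  have he : ∀ n : ℤ, f n • eb n = lp.single 2 n (f n) := by
    intro n
    rw [eb, ← lp.single_smul]
    norm_num [smul_eq_mul]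
  simpa only [he] using h

lemma hasSum_clm (S : Hl →L[ℂ] Hl) (f : Hl) :
    HasSum (fun n => f n • S (eb n)) (S f) := by
  have h := (hasSum_eb f).mapL S
  simpa only [Function.comp, map_smul] using h

lemma coord_hasSum (S : Hl →L[ℂ] Hl) (f : Hl) (m : ℤ) :
    HasSum (fun n => f n * (S (eb n)) m) ((S f) m) := by
  have h := (hasSum_clm S f).mapL (innerSL ℂ (eb m))
  simp only [Function.comp, innerSL_apply_apply, inner_smul_right, inner_eb_left] at h
  exact h

lemma shift_coord (S : Hl →L[ℂ] Hl) (cs : ℤ → ℂ)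
    (hS : ∀ n, S (eb n) = cs n • eb (n + 1)) (f : Hl) (m : ℤ) :
    (S f) m = cs (m - 1) * f (m - 1) := by
  have h := coord_hasSum S f m
  have h2 : ∀ n : ℤ, f n * (S (eb n)) m
      = if n = m - 1 then cs (m - 1) * f (m - 1) else 0 := by
    intro n
    rw [hS, lp.coeFn_smul, Pi.smul_apply, eb_apply, smul_eq_mul]
    by_cases hn : n = m - 1
    · subst hn
      rw [if_pos (by omega : m = m - 1 + 1)]
      ring_nf
      simp
    · rw [if_neg (by omega : ¬ m = n + 1), if_neg hn]
      ring
  simp only [h2] at h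
  exact h.unique (hasSum_ite_eq _ _)

lemma diag_coord (S : Hl →L[ℂ] Hl) (cs : ℤ → ℂ)
    (hS : ∀ n, S (eb n) = cs n • eb n) (f : Hl) (m : ℤ) :
    (S f) m = cs m * f m := by
  have h := coord_hasSum S f m
  have h2 : ∀ n : ℤ, f n * (S (eb n)) m = if n = m then cs m * f m else 0 := by
    intro n
    rw [hS, lp.coeFn_smul, Pi.smul_apply, eb_apply, smul_eq_mul]
    by_cases hn : n = m
    · subst hn
      rw [if_pos rfl]
      ring_nf
      simp
    · rw [if_neg (fun hc => hn hc.symm), if_neg hn]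
      ring
  simp only [h2] at h
  exact h.unique (hasSum_ite_eq _ _)

/-- The two canonical basis families of `H2`. -/
def F0 (n : ℤ) : H2 := (WithLp.equiv 2 (Hl × Hl)).symm (eb n, 0)

def F1 (n : ℤ) : H2 := (WithLp.equiv 2 (Hl × Hl)).symm (0, eb n)

@[simp] lemma F0_fst (n : ℤ) : (F0 n).fst = eb n := by
  rw [F0, WithLp.equiv_symm_apply, WithLp.toLp_fst]

@[simp] lemma F0_snd (n : ℤ) : (F0 n).snd = 0 := by
  rw [F0, WithLp.equiv_symm_apply, WithLp.toLp_snd]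

@[simp] lemma F1_fst (n : ℤ) : (F1 n).fst = 0 := by
  rw [F1, WithLp.equiv_symm_apply, WithLp.toLp_fst]

@[simp] lemma F1_snd (n : ℤ) : (F1 n).snd = eb n := by
  rw [F1, WithLp.equiv_symm_apply, WithLp.toLp_snd]

lemma inner_F0 (m : ℤ) (z : H2) : ⟪F0 m, z⟫ = z.fst m := by
  rw [WithLp.prod_inner_apply, WithLp.ofLp_fst, WithLp.ofLp_snd, WithLp.ofLp_fst, WithLp.ofLp_snd, F0_fst, F0_snd, inner_zero_left, add_zero, inner_eb_left]

lemma inner_F1 (m : ℤ) (z : H2) : ⟪F1 m, z⟫ = z.snd m := by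
  rw [WithLp.prod_inner_apply, WithLp.ofLp_fst, WithLp.ofLp_snd, WithLp.ofLp_fst, WithLp.ofLp_snd, F1_fst, F1_snd, inner_zero_left, zero_add, inner_eb_left]

lemma H2_ext (z y : H2) (h0 : ∀ m, ⟪F0 m, z⟫ = ⟪F0 m, y⟫)
    (h1 : ∀ m, ⟪F1 m, z⟫ = ⟪F1 m, y⟫) : z = y := by
  have hf : z.fst = y.fst := by
    apply lp.ext; funext m
    have := h0 m; rwa [inner_F0, inner_F0] at this
  have hs : z.snd = y.snd := by
    apply lp.ext; funext m
    have := h1 m; rwa [inner_F1, inner_F1] at this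
  apply (WithLp.equiv 2 (Hl × Hl)).injective
  apply Prod.ext
  · exact hf
  · exact hs

section Op

variable (w v d : ℤ → ℂ) (T0 T1 X : Hl →L[ℂ] Hl)

/-- The weight sequence of the corner operator `X T₁ − T₀ X`. -/
def dl (n : ℤ) : ℂ := d (n + 1) * v n - d n * w n

lemma H2_ext_parts (z y : H2) (h1 : z.fst = y.fst) (h2 : z.snd = y.snd) : z = y := by
  apply (WithLp.equiv 2 (Hl × Hl)).injective
  apply Prod.ext
  · exact h1
  · exact h2

lemma blockT_fst (z : H2) :
    (blockT T0 T1 X z).fst = T0 z.fst + (X (T1 z.snd) - T0 (X z.snd)) := rfl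

lemma blockT_snd (z : H2) : (blockT T0 T1 X z).snd = T1 z.snd := rfl

variable (hT0 : ∀ n : ℤ, T0 (eb n) = w n • eb (n + 1))
variable (hT1 : ∀ n : ℤ, T1 (eb n) = v n • eb (n + 1))
variable (hX : ∀ n : ℤ, X (eb n) = d n • eb n)

section
include hT0 hT1 hX

lemma Tz_fst (z : H2) (m : ℤ) :
    (blockT T0 T1 X z).fst m
      = w (m - 1) * z.fst (m - 1) + dl w v d (m - 1) * z.snd (m - 1) := by
  rw [blockT_fst, lp.coeFn_add, Pi.add_apply, lp.coeFn_sub, Pi.sub_apply]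
  rw [shift_coord T0 w hT0, shift_coord T0 w hT0, diag_coord X d hX,
    shift_coord T1 v hT1, diag_coord X d hX]
  rw [dl]
  have h : m - 1 + 1 = m := by ring
  rw [h]
  ring

lemma Tz_snd (z : H2) (m : ℤ) :
    (blockT T0 T1 X z).snd m = v (m - 1) * z.snd (m - 1) := by
  rw [blockT_snd, shift_coord T1 v hT1]

lemma T_F0 (n : ℤ) : blockT T0 T1 X (F0 n) = w n • F0 (n + 1) := by
  apply H2_ext_parts
  · rw [blockT_fst, WithLp.smul_fst, F0_fst, F0_snd, F0_fst, map_zero, map_zero, map_zero,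
      sub_zero, add_zero, hT0]
  · rw [blockT_snd, WithLp.smul_snd, F0_snd, F0_snd, map_zero, smul_zero]

lemma T_F1 (n : ℤ) :
    blockT T0 T1 X (F1 n) = dl w v d n • F0 (n + 1) + v n • F1 (n + 1) := by
  apply H2_ext_parts
  · rw [blockT_fst, F1_fst, F1_snd, map_zero, zero_add, hT1, hX, map_smul, map_smul, hX, hT0,
      WithLp.add_fst, WithLp.smul_fst, WithLp.smul_fst, F0_fst, F1_fst, smul_zero, add_zero,
      smul_smul, smul_smul, ← sub_smul, dl]
    congr 1
    ring
  · rw [blockT_snd, F1_snd, hT1, WithLp.add_snd, WithLp.smul_snd, WithLp.smul_snd,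
      F0_snd, F1_snd, smul_zero, zero_add]

lemma Ta_F0 (n : ℤ) :
    ContinuousLinearMap.adjoint (blockT T0 T1 X) (F0 n)
      = (starRingEnd ℂ) (w (n - 1)) • F0 (n - 1)
        + (starRingEnd ℂ) (dl w v d (n - 1)) • F1 (n - 1) := by
  apply ext_inner_right ℂ
  intro z
  rw [ContinuousLinearMap.adjoint_inner_left, inner_F0, Tz_fst w v d T0 T1 X hT0 hT1 hX,
    inner_add_left, inner_smul_left, inner_smul_left, inner_F0, inner_F1]
  simp

lemma Ta_F1 (n : ℤ) :
    ContinuousLinearMap.adjoint (blockT T0 T1 X) (F1 n)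
      = (starRingEnd ℂ) (v (n - 1)) • F1 (n - 1) := by
  apply ext_inner_right ℂ
  intro z
  rw [ContinuousLinearMap.adjoint_inner_left, inner_F1, Tz_snd w v d T0 T1 X hT0 hT1 hX,
    inner_smul_left, inner_F1]
  simp

end
end Op


lemma norm_sq_cast (z : ℂ) : z * cj z = ((‖z‖ ^ 2 : ℝ) : ℂ) := by
  rw [Complex.mul_conj]
  norm_cast
  rw [Complex.normSq_eq_norm_sq]

/-- The combinatorial core: scalar matrix entries of a commuting projection. -/
lemma abstract_core (w v δ : ℤ → ℂ) (N : ℤ)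
    (hw : ∀ n, ‖w n‖ = 1) (hv : ∀ n, ‖v n‖ = 1)
    (hinj : ∀ m n : ℤ, N < m → N < n → ‖δ m‖ ^ 2 = ‖δ n‖ ^ 2 → m = n)
    (hδk : ∃ k, δ k ≠ 0)
    (a b c : ℤ → ℤ → ℂ)
    (I1 : ∀ m n : ℤ, w n * cj (b (n+1) m) = v (m-1) * cj (b n (m-1)))
    (Iα : ∀ m n : ℤ, w n * cj (δ n) * b m n = cj (w m) * δ m * cj (b n m))
    (Iγ' : ∀ m n : ℤ, (cj (v (n-1)) * δ (n-1)) * cj (b n m)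
        = (v (m-1) * cj (δ (m-1))) * b m n)
    (Iβ : ∀ m n : ℤ, (δ n * cj (w n)) * a m n + (δ n * cj (δ n)) * b m n
        = (cj (w m) * δ m) * c m n)
    (Iβ' : ∀ m n : ℤ, (cj (v (n-1)) * δ (n-1)) * a m n
        = (δ (m-1) * cj (δ (m-1))) * b m n + (δ (m-1) * cj (v (m-1))) * c m n)
    (Iα' : ∀ m n : ℤ, (δ (n-1) * cj (δ (n-1))) * a m n + (cj (δ (n-1)) * v (n-1)) * b m n
        = (δ (m-1) * cj (δ (m-1))) * a m n + (δ (m-1) * cj (v (m-1))) * cj (b n m))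
    (Iγ : ∀ m n : ℤ, (δ n * cj (w n)) * cj (b n m) + (δ n * cj (δ n)) * c m n
        = (cj (δ m) * w m) * b m n + (δ m * cj (δ m)) * c m n)
    (I8 : ∀ m n : ℤ, w n * a m (n+1) = w (m-1) * a (m-1) n + δ (m-1) * cj (b n (m-1)))
    (I9 : ∀ m n : ℤ, δ n * cj (b (n+1) m) + v n * c m (n+1) = v (m-1) * c (m-1) n)
    (I10 : ∀ m n : ℤ, δ n * a m (n+1) + v n * b m (n+1)
        = w (m-1) * b (m-1) n + δ (m-1) * c (m-1) n) :
    (∀ m n, b m n = 0) ∧ (∀ m n : ℤ, a m n = if m = n then a 0 0 else 0) ∧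
      (∀ m n : ℤ, c m n = if m = n then a 0 0 else 0) := by
  have hwne : ∀ n, w n ≠ 0 := fun n => by
    intro h; have := hw n; rw [h] at this; simp at this
  have hvne : ∀ n, v n ≠ 0 := fun n => by
    intro h; have := hv n; rw [h] at this; simp at this
  -- Step 1 : norm of b is constant along diagonals
  have NB : ∀ p q : ℤ, ‖b (p+1) (q+1)‖ = ‖b p q‖ := by
    intro p q
    have h := I1 (q+1) p
    rw [add_sub_cancel_right] at h
    have h2 := congrArg norm h
    rw [norm_mul, norm_mul, RCLike.norm_conj, RCLike.norm_conj, hw, hv, one_mul, one_mul] at h2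
    exact h2
  have NBj : ∀ p q j : ℤ, ‖b (p+j) (q+j)‖ = ‖b p q‖ := by
    intro p q j
    induction j using Int.induction_on with
    | zero => simp
    | succ i ih =>
        rw [show p + (↑i+1) = (p + ↑i) + 1 by ring, show q + (↑i+1) = (q + ↑i) + 1 by ring,
          NB, ih]
    | pred i ih =>
        have h := NB (p + (-↑i - 1)) (q + (-↑i - 1))
        rw [show p + (-↑i-1) + 1 = p + (-↑i) by ring, show q + (-↑i-1) + 1 = q + (-↑i) by ring]
          at h
        exact h.symm.trans ih
  -- Step 2 : b vanishes
  have hb0 : ∀ m n, b m n = 0 := by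
    by_contra hcon
    push_neg at hcon
    obtain ⟨m0, n0, hbne⟩ := hcon
    set k := m0 - n0 with hkdef
    have hβpos : 0 < ‖b m0 n0‖ := norm_pos_iff.2 hbne
    have hdiag : ∀ q : ℤ, ‖b (q + k) q‖ = ‖b m0 n0‖ := by
      intro q
      have h := NBj m0 n0 (q - n0)
      rw [show m0 + (q - n0) = q + k by rw [hkdef]; ring, show n0 + (q - n0) = q by ring] at h
      exact h
    have hdiag' : ∀ q : ℤ, ‖b q (q + k)‖ = ‖b n0 (n0 + k)‖ := by
      intro q
      have h := NBj n0 (n0 + k) (q - n0)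
      rw [show n0 + (q - n0) = q by ring, show n0 + k + (q - n0) = q + k by ring] at h
      exact h
    by_cases hk : k = 0
    · -- diagonal case
      have hbq : ∀ q : ℤ, b q q ≠ 0 := by
        intro q
        have h := hdiag q
        rw [hk, add_zero] at h
        intro h0; rw [h0, norm_zero] at h; exact hβpos.ne' h.symm
      have hZ : ∀ q : ℤ, (δ (q-1) * cj (v (q-1))) * (δ q * cj (δ q))
          + (δ q * cj (w q)) * (δ (q-1) * cj (δ (q-1))) = 0 := by
        intro q
        have h1 := Iβ q q
        have h2 := Iβ' q q
        have h3 : ((δ (q-1) * cj (v (q-1))) * (δ q * cj (δ q))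
            + (δ q * cj (w q)) * (δ (q-1) * cj (δ (q-1)))) * b q q = 0 := by
          linear_combination (cj (v (q-1)) * δ (q-1)) * h1 - (δ q * cj (w q)) * h2
        exact (mul_eq_zero.1 h3).resolve_right (hbq q)
      have hzero : ∀ q : ℤ, N < q - 1 → ‖δ (q-1)‖ = 0 ∨ ‖δ q‖ = 0 := by
        intro q hq
        have h := hZ q
        have h2 := congrArg norm h
        rw [norm_zero] at h2
        have h3 : ‖(δ (q-1) * cj (v (q-1))) * (δ q * cj (δ q))‖
            = ‖(δ q * cj (w q)) * (δ (q-1) * cj (δ (q-1)))‖ := by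
          have h4 : (δ (q-1) * cj (v (q-1))) * (δ q * cj (δ q))
              = - ((δ q * cj (w q)) * (δ (q-1) * cj (δ (q-1)))) := by
            linear_combination h
          rw [h4, norm_neg]
        rw [norm_mul, norm_mul, norm_mul, norm_mul, norm_mul, norm_mul, RCLike.norm_conj,
          RCLike.norm_conj, RCLike.norm_conj, RCLike.norm_conj, hv, hw, mul_one, mul_one]
          at h3
        -- h3 : ‖δ (q-1)‖ * (‖δ q‖ * ‖δ q‖) = ‖δ q‖ * (‖δ (q-1)‖ * ‖δ (q-1)‖)
        set x := ‖δ (q-1)‖ with hx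
        set y := ‖δ q‖ with hy
        have h5 : x * y * (y - x) = 0 := by linear_combination h3
        rcases mul_eq_zero.1 h5 with h6 | h6
        · rcases mul_eq_zero.1 h6 with h7 | h7
          · exact Or.inl h7
          · exact Or.inr h7
        · exfalso
          have hxy : x = y := by linarith [sub_eq_zero.1 h6]
          have : q - 1 = q := hinj (q-1) q hq (by omega) (by rw [← hx, ← hy, hxy])
          omega
      have hz1 := hzero (N+2) (by omega)
      have hz2 := hzero (N+4) (by omega)
      have key : ∀ i j : ℤ, N < i → N < j → ‖δ i‖ = 0 → ‖δ j‖ = 0 → i = j := by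
        intro i j hi hj h1 h2
        exact hinj i j hi hj (by rw [h1, h2])
      rcases hz1 with h1 | h1 <;> rcases hz2 with h2 | h2
      · have := key (N+2-1) (N+4-1) (by omega) (by omega) h1 h2; omega
      · have := key (N+2-1) (N+4) (by omega) (by omega) h1 h2; omega
      · have := key (N+2) (N+4-1) (by omega) (by omega) h1 h2; omega
      · have := key (N+2) (N+4) (by omega) (by omega) h1 h2; omega
    · -- off-diagonal case
      have key1 : ∀ q : ℤ, ‖δ q‖ * ‖b m0 n0‖ = ‖δ (q+k)‖ * ‖b n0 (n0+k)‖ := by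
        intro q
        have h := congrArg norm (Iα (q+k) q)
        simp only [norm_mul, RCLike.norm_conj, hw, one_mul] at h
        rw [hdiag q, hdiag' q] at h
        exact h
      have key2 : ∀ q : ℤ, ‖δ q‖ * ‖b n0 (n0+k)‖ = ‖δ (q+k)‖ * ‖b m0 n0‖ := by
        intro q
        have h := congrArg norm (Iγ' (q+1+k) (q+1))
        rw [add_sub_cancel_right, show q+1+k-1 = q+k by ring] at h
        simp only [norm_mul, RCLike.norm_conj, hv, one_mul] at h
        rw [hdiag (q+1), hdiag' (q+1)] at h
        exact h
      have hpos : 0 < ‖b m0 n0‖ + ‖b n0 (n0+k)‖ := by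
        have := norm_nonneg (b n0 (n0+k)); linarith
      have hleq : ∀ q : ℤ, ‖δ q‖ = ‖δ (q+k)‖ := by
        intro q
        have h1 := key1 q
        have h2 := key2 q
        have h3 : ‖δ q‖ * (‖b m0 n0‖ + ‖b n0 (n0+k)‖)
            = ‖δ (q+k)‖ * (‖b m0 n0‖ + ‖b n0 (n0+k)‖) := by linear_combination h1 + h2
        exact mul_right_cancel₀ hpos.ne' h3
      set q0 : ℤ := N + 1 + (k.natAbs : ℤ) with hq0
      have hq1 : N < q0 := by omega
      have hq2 : N < q0 + k := by omega
      have : q0 = q0 + k := hinj q0 (q0+k) hq1 hq2 (by rw [hleq q0])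
      omega
  -- Step 3 : structure of c
  have hsqC : ∀ n : ℤ, δ n * cj (δ n) = ((‖δ n‖ ^ 2 : ℝ) : ℂ) := fun n => norm_sq_cast _
  have hctail : ∀ m n : ℤ, N < m → N < n → m ≠ n → c m n = 0 := by
    intro m n h1 h2 h3
    have h := Iγ m n
    simp only [hb0, map_zero, mul_zero, zero_add, add_zero] at h
    rw [hsqC n, hsqC m] at h
    have h4 : (((‖δ n‖^2 : ℝ) : ℂ) - ((‖δ m‖^2 : ℝ) : ℂ)) * c m n = 0 := by
      linear_combination h
    have h5 : (((‖δ n‖^2 : ℝ) : ℂ) - ((‖δ m‖^2 : ℝ) : ℂ)) ≠ 0 := by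
      rw [sub_ne_zero]
      intro he
      exact h3 (hinj n m h2 h1 (by exact_mod_cast he)).symm
    exact (mul_eq_zero.1 h4).resolve_left h5
  have NC : ∀ p q : ℤ, ‖c (p+1) (q+1)‖ = ‖c p q‖ := by
    intro p q
    have h := I9 (p+1) q
    simp only [hb0, add_sub_cancel_right, map_zero, mul_zero, zero_add] at h
    have h2 := congrArg norm h
    rw [norm_mul, norm_mul, hv, hv, one_mul, one_mul] at h2
    exact h2
  have NCj : ∀ p q j : ℤ, ‖c (p+j) (q+j)‖ = ‖c p q‖ := by
    intro p q j
    induction j using Int.induction_on with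
    | zero => simp
    | succ i ih =>
        rw [show p + (↑i+1) = (p + ↑i) + 1 by ring, show q + (↑i+1) = (q + ↑i) + 1 by ring,
          NC, ih]
    | pred i ih =>
        have h := NC (p + (-↑i - 1)) (q + (-↑i - 1))
        rw [show p + (-↑i-1) + 1 = p + (-↑i) by ring, show q + (-↑i-1) + 1 = q + (-↑i) by ring]
          at h
        exact h.symm.trans ih
  have hcoff : ∀ m n : ℤ, m ≠ n → c m n = 0 := by
    intro m n hmn
    have hle1 := le_max_left (N + 1 - m) (N + 1 - n)
    have hle2 := le_max_right (N + 1 - m) (N + 1 - n)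
    set j := max (N + 1 - m) (N + 1 - n) with hj
    have h := NCj m n j
    rw [hctail (m+j) (n+j) (by omega) (by omega) (by omega)] at h
    rw [norm_zero] at h
    exact norm_eq_zero.1 h.symm
  have hcstep : ∀ n : ℤ, c (n+1) (n+1) = c n n := by
    intro n
    have h := I9 (n+1) n
    simp only [hb0, add_sub_cancel_right, map_zero, mul_zero, zero_add] at h
    exact mul_left_cancel₀ (hvne n) h
  have hcdiag : ∀ n : ℤ, c n n = c 0 0 := by
    intro n
    induction n using Int.induction_on with
    | zero => rfl
    | succ i ih => rw [hcstep, ih]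
    | pred i ih =>
        have h := hcstep (-↑i-1)
        rw [show (-↑i-1+1 : ℤ) = (-↑i : ℤ) by ring] at h
        exact h.symm.trans ih
  -- Step 4 : structure of a
  have hatail : ∀ m n : ℤ, N + 1 < m → N + 1 < n → m ≠ n → a m n = 0 := by
    intro m n h1 h2 h3
    have h := Iα' m n
    simp only [hb0, map_zero, mul_zero, zero_mul, zero_add, add_zero] at h
    rw [hsqC (n-1), hsqC (m-1)] at h
    have h4 : (((‖δ (n-1)‖^2 : ℝ) : ℂ) - ((‖δ (m-1)‖^2 : ℝ) : ℂ)) * a m n = 0 := by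
      linear_combination h
    have h5 : (((‖δ (n-1)‖^2 : ℝ) : ℂ) - ((‖δ (m-1)‖^2 : ℝ) : ℂ)) ≠ 0 := by
      rw [sub_ne_zero]
      intro he
      have := hinj (n-1) (m-1) (by omega) (by omega) (by exact_mod_cast he)
      omega
    exact (mul_eq_zero.1 h4).resolve_left h5
  have NA : ∀ p q : ℤ, ‖a (p+1) (q+1)‖ = ‖a p q‖ := by
    intro p q
    have h := I8 (p+1) q
    simp only [hb0, add_sub_cancel_right, map_zero, mul_zero, add_zero] at h
    have h2 := congrArg norm h
    rw [norm_mul, norm_mul, hw, hw, one_mul, one_mul] at h2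
    exact h2
  have NAj : ∀ p q j : ℤ, ‖a (p+j) (q+j)‖ = ‖a p q‖ := by
    intro p q j
    induction j using Int.induction_on with
    | zero => simp
    | succ i ih =>
        rw [show p + (↑i+1) = (p + ↑i) + 1 by ring, show q + (↑i+1) = (q + ↑i) + 1 by ring,
          NA, ih]
    | pred i ih =>
        have h := NA (p + (-↑i - 1)) (q + (-↑i - 1))
        rw [show p + (-↑i-1) + 1 = p + (-↑i) by ring, show q + (-↑i-1) + 1 = q + (-↑i) by ring]
          at h
        exact h.symm.trans ih
  have haoff : ∀ m n : ℤ, m ≠ n → a m n = 0 := by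
    intro m n hmn
    have hle1 := le_max_left (N + 2 - m) (N + 2 - n)
    have hle2 := le_max_right (N + 2 - m) (N + 2 - n)
    set j := max (N + 2 - m) (N + 2 - n) with hj
    have h := NAj m n j
    rw [hatail (m+j) (n+j) (by omega) (by omega) (by omega)] at h
    rw [norm_zero] at h
    exact norm_eq_zero.1 h.symm
  have hastep : ∀ n : ℤ, a (n+1) (n+1) = a n n := by
    intro n
    have h := I8 (n+1) n
    simp only [hb0, add_sub_cancel_right, map_zero, mul_zero, add_zero] at h
    exact mul_left_cancel₀ (hwne n) h
  have hadiag : ∀ n : ℤ, a n n = a 0 0 := by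
    intro n
    induction n using Int.induction_on with
    | zero => rfl
    | succ i ih => rw [hastep, ih]
    | pred i ih =>
        have h := hastep (-↑i-1)
        rw [show (-↑i-1+1 : ℤ) = (-↑i : ℤ) by ring] at h
        exact h.symm.trans ih
  -- Step 5 : a 0 0 = c 0 0
  obtain ⟨k0, hk0⟩ := hδk
  have hac : a 0 0 = c 0 0 := by
    have h := I10 (k0+1) k0
    simp only [hb0, add_sub_cancel_right, mul_zero, add_zero, zero_add] at h
    have h2 := mul_left_cancel₀ hk0 h
    rw [hadiag, hcdiag] at h2
    exact h2
  refine ⟨hb0, fun m n => ?_, fun m n => ?_⟩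
  · by_cases h : m = n
    · subst h; rw [if_pos rfl, hadiag]
    · rw [if_neg h]; exact haoff m n h
  · by_cases h : m = n
    · subst h; rw [if_pos rfl, hcdiag, ← hac]
    · rw [if_neg h]; exact hcoff m n h


end IrredAux

section MainProof

local notation "⟪" x ", " y "⟫" => @inner ℂ _ _ x y
local notation "cj" => starRingEnd ℂ

set_option maxHeartbeats 2000000 in
open IrredAux in
/-- Theorem 3.7: irreducibility of `T(wₙ, vₙ, dₙ)` with unimodular weights. -/
theorem irreducibility_of_T_w_v_d
    (w v : ℤ → ℂ) (hw : ∀ n, ‖w n‖ = 1) (hv : ∀ n, ‖v n‖ = 1)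
    (d : ℤ → ℂ) (hdb : ∃ C : ℝ, ∀ n, ‖d n‖ ≤ C)
    (T0 T1 X : Hl →L[ℂ] Hl)
    (hT0 : ∀ n : ℤ, T0 (eb n) = w n • eb (n + 1))
    (hT1 : ∀ n : ℤ, T1 (eb n) = v n • eb (n + 1))
    (hX : ∀ n : ℤ, X (eb n) = d n • eb n)
    (hXT : X.comp T1 ≠ T0.comp X)
    (hg : ∃ g : ℤ ≃ ℤ, ∃ N : ℤ,
      (∀ m n : ℤ, N < m → N < n → sqSeq w v d m = sqSeq w v d n → m = n) ∧
      (∀ n : ℤ, sqSeq w v d n = sqSeq w v d (g n)))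
    (hcond : ∀ n : ℤ,
      (¬ ∃ r : ℝ, d (n + 1) * cSeq' w v d n + d n * cSeq' w v d (n - 1) -
          d (n + 1) * starRingEnd ℂ (w n) * v n * cSeq' w v d (n - 1) = (r : ℂ)) ∨
      (starRingEnd ℂ (d (n + 1)) * w n * v n - starRingEnd ℂ (d n)) *
          ((sqSeq w v d (n - 1) : ℝ) : ℂ) ≠
        (starRingEnd ℂ (d (n - 1)) * starRingEnd ℂ (w (n - 1)) * v (n - 1) -
            starRingEnd ℂ (d n)) * ((sqSeq w v d n : ℝ) : ℂ)) :
    IsIrreducibleOp (blockT T0 T1 X) := by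
  classical
  obtain ⟨g, N, hinj, -⟩ := hg
  intro K hKc hKT hKTa
  haveI : CompleteSpace K := hKc.completeSpace_coe
  set T : H2 →L[ℂ] H2 := blockT T0 T1 X with hTdef
  set Ta : H2 →L[ℂ] H2 := ContinuousLinearMap.adjoint T with hTadef
  set P : H2 →L[ℂ] H2 := K.subtypeL ∘L K.orthogonalProjectionOnto with hPdef
  set Dl : ℤ → ℂ := dl w v d with hDldef
  -- basic facts about P
  have hPmem : ∀ z : H2, P z ∈ K := by
    intro z
    rw [hPdef]
    exact Submodule.coe_mem _
  have hPid : ∀ z ∈ K, P z = z := by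
    intro z hz
    rw [hPdef]
    exact K.starProjection_eq_self_iff.2 hz
  have hPperp : ∀ z ∈ Kᗮ, P z = 0 := by
    intro z hz
    rw [hPdef]
    show (↑(K.orthogonalProjectionOnto z) : H2) = 0
    rw [Submodule.orthogonalProjectionOnto_apply_of_mem_orthogonal hz]
    rfl
  have hPsa : IsSelfAdjoint P := isSelfAdjoint_starProjection K
  have hsa : ∀ x y : H2, ⟪P x, y⟫ = ⟪x, P y⟫ := by
    intro x y
    conv_lhs => rw [← hPsa.adjoint_eq]
    exact ContinuousLinearMap.adjoint_inner_left P y x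
  have hcomm : ∀ S : H2 →L[ℂ] H2, (∀ x ∈ K, S x ∈ K) →
      (∀ x ∈ K, ContinuousLinearMap.adjoint S x ∈ K) → ∀ z, P (S z) = S (P z) := by
    intro S hS hS' z
    have hzperp : z - P z ∈ Kᗮ := by
      rw [hPdef]
      exact K.sub_starProjection_mem_orthogonal z
    have hmem1 : S (P z) ∈ K := hS _ (hPmem z)
    have hmem2 : S (z - P z) ∈ Kᗮ := by
      rw [Submodule.mem_orthogonal]
      intro u hu
      rw [← ContinuousLinearMap.adjoint_inner_left]
      exact Submodule.inner_right_of_mem_orthogonal (hS' u hu) hzperp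
    have hsplit : S z = S (P z) + S (z - P z) := by
      rw [← map_add]
      congr 1
      abel
    rw [hsplit, map_add, hPid _ hmem1, hPperp _ hmem2, add_zero]
  have hPT : ∀ z, P (T z) = T (P z) := hcomm T hKT hKTa
  have hPTa : ∀ z, P (Ta z) = Ta (P z) := by
    refine hcomm Ta hKTa ?_
    intro x hx
    rw [hTadef, ContinuousLinearMap.adjoint_adjoint]
    exact hKT x hx
  -- inner-product commutation identities
  have key : ∀ f g' : H2, ⟪f, P (T g')⟫ = ⟪Ta f, P g'⟫ := by
    intro f g'
    rw [hPT, hTadef, ContinuousLinearMap.adjoint_inner_left]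
  have keyA : ∀ f g' : H2, ⟪f, P (Ta (T g'))⟫ = ⟪Ta (T f), P g'⟫ := by
    intro f g'
    rw [hPTa, hPT, hTadef, ContinuousLinearMap.adjoint_inner_right,
      ContinuousLinearMap.adjoint_inner_left]
  have keyB : ∀ f g' : H2, ⟪f, P (T (Ta g'))⟫ = ⟪T (Ta f), P g'⟫ := by
    intro f g'
    rw [hPT, hPTa, hTadef, ← ContinuousLinearMap.adjoint_inner_left,
      ContinuousLinearMap.adjoint_inner_right]
  have hbconj : ∀ m n : ℤ, ⟪F1 m, P (F0 n)⟫ = cj ⟪F0 n, P (F1 m)⟫ := by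
    intro m n
    rw [inner_conj_symm, hsa]
  -- action of T and its adjoint on the basis
  have tF0 : ∀ n : ℤ, T (F0 n) = w n • F0 (n + 1) := fun n =>
    T_F0 (hT0 := hT0) (hT1 := hT1) (hX := hX) (n := n)
  have tF1 : ∀ n : ℤ, T (F1 n) = Dl n • F0 (n + 1) + v n • F1 (n + 1) := fun n =>
    T_F1 (hT0 := hT0) (hT1 := hT1) (hX := hX) (n := n)
  have taF0 : ∀ n : ℤ, Ta (F0 n)
      = cj (w (n - 1)) • F0 (n - 1) + cj (Dl (n - 1)) • F1 (n - 1) := fun n =>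
    Ta_F0 (hT0 := hT0) (hT1 := hT1) (hX := hX) (n := n)
  have taF1 : ∀ n : ℤ, Ta (F1 n) = cj (v (n - 1)) • F1 (n - 1) := fun n =>
    Ta_F1 (hT0 := hT0) (hT1 := hT1) (hX := hX) (n := n)
  -- scalar facts about the weights
  have hww : ∀ k : ℤ, w k * cj (w k) = 1 := by
    intro k; rw [norm_sq_cast, hw]; norm_num
  have hvv : ∀ k : ℤ, v k * cj (v k) = 1 := by
    intro k; rw [norm_sq_cast, hv]; norm_num
  -- second-order actions
  have tataF0 : ∀ n : ℤ, Ta (T (F0 n)) = F0 n + (w n * cj (Dl n)) • F1 n := by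
    intro n
    rw [tF0, map_smul, taF0, add_sub_cancel_right]
    match_scalars
    · linear_combination hww n
    · ring
  have tataF1 : ∀ n : ℤ, Ta (T (F1 n))
      = (Dl n * cj (w n)) • F0 n + (Dl n * cj (Dl n) + 1) • F1 n := by
    intro n
    rw [tF1, map_add, map_smul, map_smul, taF0, taF1, add_sub_cancel_right]
    match_scalars
    · ring
    · linear_combination hvv n
  have ttaF0 : ∀ n : ℤ, T (Ta (F0 n))
      = (1 + Dl (n - 1) * cj (Dl (n - 1))) • F0 n
        + (cj (Dl (n - 1)) * v (n - 1)) • F1 n := by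
    intro n
    rw [taF0, map_add, map_smul, map_smul, tF0, tF1, sub_add_cancel]
    match_scalars
    · linear_combination hww (n - 1)
    · ring
  have ttaF1 : ∀ n : ℤ, T (Ta (F1 n)) = (cj (v (n - 1)) * Dl (n - 1)) • F0 n + F1 n := by
    intro n
    rw [taF1, map_smul, tF1, sub_add_cancel]
    match_scalars
    · ring
    · linear_combination hvv (n - 1)
  -- existence of a nonzero corner weight
  have hδk : ∃ k, Dl k ≠ 0 := by
    by_contra hno
    push_neg at hno
    refine hXT ?_
    apply ContinuousLinearMap.ext
    intro f
    apply lp.ext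
    funext m
    rw [ContinuousLinearMap.comp_apply, ContinuousLinearMap.comp_apply,
      diag_coord X d hX, shift_coord T1 v hT1, shift_coord T0 w hT0, diag_coord X d hX]
    have h0 := hno (m - 1)
    rw [hDldef] at h0
    simp only [dl] at h0
    rw [show m - 1 + 1 = m by ring] at h0
    linear_combination f (m - 1) * h0
  -- the ten entry identities
  have myI1 : ∀ m n : ℤ, w n * cj ⟪F0 (n+1), P (F1 m)⟫
      = v (m-1) * cj ⟪F0 n, P (F1 (m-1))⟫ := by
    intro m n
    have h := key (F1 m) (F0 n)
    rw [tF0 n, taF1 m] at h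
    simp only [map_smul, inner_smul_left, inner_smul_right, Complex.conj_conj, hbconj] at h
    exact h
  have myIα : ∀ m n : ℤ, w n * cj (Dl n) * ⟪F0 m, P (F1 n)⟫
      = cj (w m) * Dl m * cj ⟪F0 n, P (F1 m)⟫ := by
    intro m n
    have h := keyA (F0 m) (F0 n)
    rw [tataF0 n, tataF0 m] at h
    simp only [map_add, map_smul, map_mul, map_one, inner_add_right, inner_smul_right,
      inner_add_left, inner_smul_left, Complex.conj_conj, hbconj] at h
    linear_combination h
  have myIγ' : ∀ m n : ℤ, (cj (v (n-1)) * Dl (n-1)) * cj ⟪F0 n, P (F1 m)⟫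
      = (v (m-1) * cj (Dl (m-1))) * ⟪F0 m, P (F1 n)⟫ := by
    intro m n
    have h := keyB (F1 m) (F1 n)
    rw [ttaF1 n, ttaF1 m] at h
    simp only [map_add, map_smul, map_mul, map_one, inner_add_right, inner_smul_right,
      inner_add_left, inner_smul_left, Complex.conj_conj, hbconj] at h
    linear_combination h
  have myIβ : ∀ m n : ℤ, (Dl n * cj (w n)) * ⟪F0 m, P (F0 n)⟫
      + (Dl n * cj (Dl n)) * ⟪F0 m, P (F1 n)⟫
      = (cj (w m) * Dl m) * ⟪F1 m, P (F1 n)⟫ := by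
    intro m n
    have h := keyA (F0 m) (F1 n)
    rw [tataF1 n, tataF0 m] at h
    simp only [map_add, map_smul, map_mul, map_one, inner_add_right, inner_smul_right,
      inner_add_left, inner_smul_left, Complex.conj_conj, hbconj] at h
    linear_combination h
  have myIβ' : ∀ m n : ℤ, (cj (v (n-1)) * Dl (n-1)) * ⟪F0 m, P (F0 n)⟫
      = (Dl (m-1) * cj (Dl (m-1))) * ⟪F0 m, P (F1 n)⟫
        + (Dl (m-1) * cj (v (m-1))) * ⟪F1 m, P (F1 n)⟫ := by
    intro m n
    have h := keyB (F0 m) (F1 n)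
    rw [ttaF1 n, ttaF0 m] at h
    simp only [map_add, map_smul, map_mul, map_one, inner_add_right, inner_smul_right,
      inner_add_left, inner_smul_left, Complex.conj_conj, hbconj] at h
    linear_combination h
  have myIα' : ∀ m n : ℤ, (Dl (n-1) * cj (Dl (n-1))) * ⟪F0 m, P (F0 n)⟫
      + (cj (Dl (n-1)) * v (n-1)) * ⟪F0 m, P (F1 n)⟫
      = (Dl (m-1) * cj (Dl (m-1))) * ⟪F0 m, P (F0 n)⟫
        + (Dl (m-1) * cj (v (m-1))) * cj ⟪F0 n, P (F1 m)⟫ := by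
    intro m n
    have h := keyB (F0 m) (F0 n)
    rw [ttaF0 n, ttaF0 m] at h
    simp only [map_add, map_smul, map_mul, map_one, inner_add_right, inner_smul_right,
      inner_add_left, inner_smul_left, Complex.conj_conj, hbconj] at h
    linear_combination h
  have myIγ : ∀ m n : ℤ, (Dl n * cj (w n)) * cj ⟪F0 n, P (F1 m)⟫
      + (Dl n * cj (Dl n)) * ⟪F1 m, P (F1 n)⟫
      = (cj (Dl m) * w m) * ⟪F0 m, P (F1 n)⟫
        + (Dl m * cj (Dl m)) * ⟪F1 m, P (F1 n)⟫ := by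
    intro m n
    have h := keyA (F1 m) (F1 n)
    rw [tataF1 n, tataF1 m] at h
    simp only [map_add, map_smul, map_mul, map_one, inner_add_right, inner_smul_right,
      inner_add_left, inner_smul_left, Complex.conj_conj, hbconj] at h
    linear_combination h
  have myI8 : ∀ m n : ℤ, w n * ⟪F0 m, P (F0 (n+1))⟫
      = w (m-1) * ⟪F0 (m-1), P (F0 n)⟫ + Dl (m-1) * cj ⟪F0 n, P (F1 (m-1))⟫ := by
    intro m n
    have h := key (F0 m) (F0 n)
    rw [tF0 n, taF0 m] at h
    simp only [map_add, map_smul, map_mul, map_one, inner_add_right, inner_smul_right,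
      inner_add_left, inner_smul_left, Complex.conj_conj, hbconj] at h
    linear_combination h
  have myI9 : ∀ m n : ℤ, Dl n * cj ⟪F0 (n+1), P (F1 m)⟫ + v n * ⟪F1 m, P (F1 (n+1))⟫
      = v (m-1) * ⟪F1 (m-1), P (F1 n)⟫ := by
    intro m n
    have h := key (F1 m) (F1 n)
    rw [tF1 n, taF1 m] at h
    simp only [map_add, map_smul, map_mul, map_one, inner_add_right, inner_smul_right,
      inner_add_left, inner_smul_left, Complex.conj_conj, hbconj] at h
    linear_combination h
  have myI10 : ∀ m n : ℤ, Dl n * ⟪F0 m, P (F0 (n+1))⟫ + v n * ⟪F0 m, P (F1 (n+1))⟫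
      = w (m-1) * ⟪F0 (m-1), P (F1 n)⟫ + Dl (m-1) * ⟪F1 (m-1), P (F1 n)⟫ := by
    intro m n
    have h := key (F0 m) (F1 n)
    rw [tF1 n, taF0 m] at h
    simp only [map_add, map_smul, map_mul, map_one, inner_add_right, inner_smul_right,
      inner_add_left, inner_smul_left, Complex.conj_conj, hbconj] at h
    linear_combination h
  -- apply the combinatorial core
  obtain ⟨hb0, haS, hcS⟩ :=
    abstract_core w v Dl N hw hv (fun m n h1 h2 h3 => hinj m n h1 h2 h3) hδk
      (fun m n => ⟪F0 m, P (F0 n)⟫) (fun m n => ⟪F0 m, P (F1 n)⟫)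
      (fun m n => ⟪F1 m, P (F1 n)⟫)
      myI1 myIα myIγ' myIβ myIβ' myIα' myIγ myI8 myI9 myI10
  have hb0' : ∀ m n : ℤ, ⟪F0 m, P (F1 n)⟫ = 0 := hb0
  have haS' : ∀ m n : ℤ, ⟪F0 m, P (F0 n)⟫
      = if m = n then ⟪F0 0, P (F0 0)⟫ else 0 := haS
  have hcS' : ∀ m n : ℤ, ⟪F1 m, P (F1 n)⟫
      = if m = n then ⟪F0 0, P (F0 0)⟫ else 0 := hcS
  set alpha : ℂ := ⟪F0 0, P (F0 0)⟫ with halphadef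
  have hPF0 : ∀ n : ℤ, P (F0 n) = alpha • F0 n := by
    intro n
    apply H2_ext
    · intro m
      rw [haS' m n, inner_smul_right, inner_F0, F0_fst, eb_apply]
      by_cases h : m = n
      · rw [if_pos h, if_pos h, mul_one]
      · rw [if_neg h, if_neg h, mul_zero]
    · intro m
      rw [hbconj, hb0', map_zero, inner_smul_right, inner_F1, F0_snd]
      simp
  have hPF1 : ∀ n : ℤ, P (F1 n) = alpha • F1 n := by
    intro n
    apply H2_ext
    · intro m
      rw [hb0', inner_smul_right, inner_F0, F1_fst]
      simp
    · intro m
      rw [hcS' m n, inner_smul_right, inner_F1, F1_snd, eb_apply]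
      by_cases h : m = n
      · rw [if_pos h, if_pos h, mul_one]
      · rw [if_neg h, if_neg h, mul_zero]
  have halpha : alpha * alpha = alpha := by
    have h1 : P (P (F0 0)) = P (F0 0) := hPid _ (hPmem (F0 0))
    rw [hPF0 0, map_smul, hPF0 0, smul_smul] at h1
    have h2 : ⟪F0 0, (alpha * alpha) • F0 (0:ℤ)⟫ = ⟪F0 0, alpha • F0 (0:ℤ)⟫ := by rw [h1]
    rw [inner_smul_right, inner_smul_right, inner_F0, F0_fst, eb_apply, if_pos rfl,
      mul_one, mul_one] at h2
    exact h2
  have hcases : alpha = 0 ∨ alpha = 1 := by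
    have h3 : alpha * (alpha - 1) = 0 := by linear_combination halpha
    rcases mul_eq_zero.1 h3 with h | h
    · exact Or.inl h
    · exact Or.inr (by linear_combination h)
  rcases hcases with h0 | h1
  · left
    rw [Submodule.eq_bot_iff]
    intro x hx
    have hx2 : P x = x := hPid x hx
    rw [← hx2]
    apply H2_ext
    · intro m
      rw [← hsa, hPF0, h0, zero_smul, inner_zero_left, inner_zero_right]
    · intro m
      rw [← hsa, hPF1, h0, zero_smul, inner_zero_left, inner_zero_right]
  · right
    rw [Submodule.eq_top_iff']
    intro x
    have hx : P x = x := by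
      apply H2_ext
      · intro m
        rw [← hsa, hPF0, h1, one_smul]
      · intro m
        rw [← hsa, hPF1, h1, one_smul]
    rw [← hx]
    exact hPmem x

end MainProof
end
end

section
/- Let (w_n)_{n∈ℤ} and (v_n)_{n∈ℤ} be bounded sequences of nonzero complex numbers, let (d_n)_{n∈ℤ} be a bounded sequence of complex numbers with XT₁ ≠ T₀X, and let T = T(w_n, v_n, d_n) be the associated bounded block-shift operator on H ⊕ H. If both bilateral weighted shifts T₀ and T₁ are irreducible and for all i, j ∈ ℤ one has lim_{k→∞} ∏_{m=0}^{k} (|w_{j+m}| / |v_{i+m}|) = 0, then T is irreducible. -/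
noncomputable section

open Complex Metric

local notation "⟪" x ", " y "⟫" => @inner ℂ _ _ x y

lemma inner_eb_left (n : ℤ) (f : Hl) : ⟪eb n, f⟫ = f n := by
  simp [eb, lp.inner_single_left]

lemma Hl_ext {f g : Hl} (h : ∀ n, ⟪eb n, f⟫ = ⟪eb n, g⟫) : f = g := by
  ext n
  simpa [inner_eb_left] using h n

lemma eb_norm (n : ℤ) : ‖eb n‖ = 1 := by
  have := lp.norm_single (p := 2) (E := fun _ : ℤ => ℂ) (by norm_num) n (1 : ℂ)
  simpa [eb] using this

lemma clm_eq_zero_of_eb {Y : Hl →L[ℂ] Hl} (h : ∀ n, Y (eb n) = 0) : Y = 0 := by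
  have : ∀ f : Hl, Y f = 0 := by
    intro f
    have hs : HasSum (fun i : ℤ => lp.single 2 i (f i)) f := lp.hasSum_single ENNReal.ofNat_ne_top f
    have hs2 : HasSum (fun i : ℤ => Y (lp.single 2 i (f i))) (Y f) := hs.mapL Y
    have hz : ∀ i : ℤ, Y (lp.single 2 i (f i)) = 0 := by
      intro i
      have h1 : lp.single 2 i (f i) = (f i) • eb i := by
        rw [eb, ← lp.single_smul]
        norm_num
      rw [h1, map_smul, h i, smul_zero]
    simp only [hz] at hs2
    simpa using hs2.unique hasSum_zero
  exact ContinuousLinearMap.ext fun f => this f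

lemma eb_apply (n m : ℤ) : (eb n : ∀ _ : ℤ, ℂ) m = if m = n then 1 else 0 := by
  rw [eb, lp.single_apply]
  split_ifs with h
  · subst h; simp
  · simp [h]

/-- Adjoint of a weighted shift on basis vectors. -/
lemma shift_adjoint (c : ℤ → ℂ) (S : Hl →L[ℂ] Hl)
    (hS : ∀ n : ℤ, S (eb n) = c n • eb (n + 1)) (i : ℤ) :
    ContinuousLinearMap.adjoint S (eb (i + 1)) = (starRingEnd ℂ) (c i) • eb i := by
  apply Hl_ext
  intro n
  rw [inner_smul_right]
  rw [ContinuousLinearMap.adjoint_inner_right]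
  rw [hS n, inner_smul_left, inner_eb_left, inner_eb_left, eb_apply, eb_apply]
  by_cases h : n = i
  · subst h; simp
  · have h2 : ¬ (n + 1 = i + 1) := fun hh => h (by omega)
    simp [h, h2]

open Filter in
lemma intertwine_eq_zero (w v : ℤ → ℂ) (hv0 : ∀ n, v n ≠ 0)
    (T0 T1 : Hl →L[ℂ] Hl)
    (hT0 : ∀ n : ℤ, T0 (eb n) = w n • eb (n + 1))
    (hT1 : ∀ n : ℤ, T1 (eb n) = v n • eb (n + 1))
    (hlim : ∀ i j : ℤ, Tendsto
      (fun k : ℕ => ∏ m ∈ Finset.range (k + 1), ‖w (j + (m : ℤ))‖ / ‖v (i + (m : ℤ))‖)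
      atTop (nhds 0))
    (Y : Hl →L[ℂ] Hl) (hY : ∀ x, Y (T0 x) = T1 (Y x)) : Y = 0 := by
  set y : ℤ → ℤ → ℂ := fun i j => ⟪eb i, Y (eb j)⟫ with hy
  have hbound : ∀ a b : ℤ, ‖y a b‖ ≤ ‖Y‖ := by
    intro a b
    calc ‖y a b‖ ≤ ‖eb a‖ * ‖Y (eb b)‖ := norm_inner_le_norm _ _
    _ ≤ ‖eb a‖ * (‖Y‖ * ‖eb b‖) := by
        gcongr
        exact Y.le_opNorm _
    _ = ‖Y‖ := by rw [eb_norm, eb_norm]; ring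
  have hrec : ∀ i j : ℤ, v i * y i j = w j * y (i + 1) (j + 1) := by
    intro i j
    have h1 : Y (T0 (eb j)) = T1 (Y (eb j)) := hY _
    rw [hT0, map_smul] at h1
    have h2 := congrArg (fun f : Hl => (⟪eb (i + 1), f⟫ : ℂ)) h1
    simp only [inner_smul_right] at h2
    have h3 : (⟪eb (i + 1), T1 (Y (eb j))⟫ : ℂ) = v i * y i j := by
      rw [← ContinuousLinearMap.adjoint_inner_left T1,
        shift_adjoint v T1 hT1 i, inner_smul_left]
      simp [hy]
    rw [h3] at h2
    exact h2.symm
  have hiter : ∀ i j : ℤ, ∀ k : ℕ,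
      y i j = (∏ m ∈ Finset.range k, (w (j + (m : ℤ)) / v (i + (m : ℤ)))) * y (i + k) (j + k) := by
    intro i j k
    induction k with
    | zero => simp
    | succ k ih =>
      have h2 : y (i + k) (j + k)
          = (w (j + k) / v (i + k)) * y (i + k + 1) (j + k + 1) := by
        rw [div_mul_eq_mul_div, eq_div_iff (hv0 _)]
        linear_combination hrec (i + k) (j + k)
      rw [ih, h2, Finset.prod_range_succ]
      push_cast
      rw [show i + ((k : ℤ) + 1) = i + (k : ℤ) + 1 by ring,
        show j + ((k : ℤ) + 1) = j + (k : ℤ) + 1 by ring]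
      ring
  have hz : ∀ i j : ℤ, y i j = 0 := by
    intro i j
    have hle : ∀ k : ℕ,
        ‖y i j‖ ≤ (∏ m ∈ Finset.range (k + 1), ‖w (j + (m : ℤ))‖ / ‖v (i + (m : ℤ))‖) * ‖Y‖ := by
      intro k
      have e1 : ‖y i j‖ = (∏ m ∈ Finset.range (k + 1), ‖w (j + (m : ℤ))‖ / ‖v (i + (m : ℤ))‖)
          * ‖y (i + ((k + 1 : ℕ) : ℤ)) (j + ((k + 1 : ℕ) : ℤ))‖ := by
        rw [hiter i j (k + 1), norm_mul, norm_prod]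
        congr 1
        exact Finset.prod_congr rfl fun m _ => norm_div _ _
      rw [e1]
      exact mul_le_mul_of_nonneg_left (hbound _ _)
        (Finset.prod_nonneg fun m _ => div_nonneg (norm_nonneg _) (norm_nonneg _))
    have htend : Tendsto
        (fun k : ℕ => (∏ m ∈ Finset.range (k + 1), ‖w (j + (m : ℤ))‖ / ‖v (i + (m : ℤ))‖) * ‖Y‖)
        atTop (nhds 0) := by
      have h := (hlim i j).mul_const ‖Y‖
      rwa [zero_mul] at h
    have hle0 : ‖y i j‖ ≤ 0 := ge_of_tendsto' htend hle
    have heq0 : ‖y i j‖ = 0 := le_antisymm hle0 (norm_nonneg _)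
    simpa using heq0
  apply clm_eq_zero_of_eb
  intro n
  apply Hl_ext
  intro m
  rw [inner_zero_right]
  exact hz m n

lemma proj_comm {E : Type*} [NormedAddCommGroup E] [InnerProductSpace ℂ E] [CompleteSpace E]
    (K : Submodule ℂ E) [K.HasOrthogonalProjection]
    (T : E →L[ℂ] E) (h1 : ∀ x ∈ K, T x ∈ K)
    (h2 : ∀ x ∈ K, ContinuousLinearMap.adjoint T x ∈ K) (x : E) :
    (K.orthogonalProjectionOnto (T x) : E) = T (K.orthogonalProjectionOnto x) := by
  have hu : x - (K.orthogonalProjectionOnto x : E) ∈ Kᗮ := K.sub_starProjection_mem_orthogonal x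
  have hTu : T (x - (K.orthogonalProjectionOnto x : E)) ∈ Kᗮ := by
    rw [Submodule.mem_orthogonal]
    intro k hk
    rw [← ContinuousLinearMap.adjoint_inner_left]
    exact (Submodule.mem_orthogonal K _).mp hu _ (h2 k hk)
  have goal : (K.orthogonalProjectionOnto (T x) : E)
      = (K.orthogonalProjectionOnto (T (K.orthogonalProjectionOnto x : E)) : E)
        + (K.orthogonalProjectionOnto (T (x - (K.orthogonalProjectionOnto x : E))) : E) := by
    rw [← Submodule.coe_add, ← map_add, ← map_add, add_sub_cancel]
  rw [goal, Submodule.orthogonalProjectionOnto_apply_of_mem_orthogonal hTu]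
  simp only [ZeroMemClass.coe_zero, add_zero]
  exact (Submodule.starProjection_eq_self_iff (K := K)).mpr (h1 _ (K.orthogonalProjectionOnto x).2)

lemma selfadj_idem_comm_dichotomy (S : Hl →L[ℂ] Hl) (hIrr : IsIrreducibleOp S)
    (A : Hl →L[ℂ] Hl) (hsym : ∀ x y : Hl, ⟪A x, y⟫ = ⟪x, A y⟫)
    (hidem : ∀ x, A (A x) = A x) (hcomm : ∀ x, A (S x) = S (A x)) :
    (∀ x, A x = 0) ∨ (∀ x, A x = x) := by
  have hAsa : IsSelfAdjoint A :=
    LinearMap.IsSymmetric.isSelfAdjoint (fun x y => hsym x y)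
  set K0 : Submodule ℂ Hl := LinearMap.ker ((ContinuousLinearMap.id ℂ Hl - A : Hl →L[ℂ] Hl) : Hl →ₗ[ℂ] Hl) with hK0
  have hmem : ∀ x : Hl, x ∈ K0 ↔ A x = x := by
    intro x
    rw [hK0, LinearMap.mem_ker]
    constructor
    · intro hx
      have : x - A x = 0 := hx
      have := sub_eq_zero.mp this
      exact this.symm
    · intro hx
      show x - A x = 0
      rw [hx, sub_self]
  have hop : A.comp S = S.comp A := ContinuousLinearMap.ext fun x => hcomm x
  have hadj : ∀ x, A (ContinuousLinearMap.adjoint S x) = ContinuousLinearMap.adjoint S (A x) := by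
    have h := congrArg ContinuousLinearMap.adjoint hop
    rw [ContinuousLinearMap.adjoint_comp, ContinuousLinearMap.adjoint_comp, hAsa.adjoint_eq] at h
    intro x
    exact (ContinuousLinearMap.ext_iff.mp h x).symm
  have hinv1 : ∀ x ∈ K0, S x ∈ K0 := by
    intro x hx
    rw [hmem] at hx ⊢
    rw [hcomm, hx]
  have hinv2 : ∀ x ∈ K0, ContinuousLinearMap.adjoint S x ∈ K0 := by
    intro x hx
    rw [hmem] at hx ⊢
    rw [hadj, hx]
  rcases hIrr K0 (ContinuousLinearMap.isClosed_ker _) hinv1 hinv2 with h | h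
  · left
    intro x
    have hx : A x ∈ K0 := (hmem _).mpr (hidem x)
    rw [h] at hx
    simpa using hx
  · right
    intro x
    have hx : x ∈ K0 := by rw [h]; trivial
    exact (hmem _).mp hx

open Filter in
/-- Proposition 3.9: if `T₀` and `T₁` are irreducible and
`lim_{k→∞} ∏_{m=0}^{k} |w_{j+m}|/|v_{i+m}| = 0` for all `i, j`, then `T(wₙ, vₙ, dₙ)`
is irreducible. -/
theorem irreducibility_of_T_w_v_d_of_prod_tendsto_zero
    (w v : ℤ → ℂ) (hw0 : ∀ n, w n ≠ 0) (hv0 : ∀ n, v n ≠ 0)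
    (hwb : ∃ C : ℝ, ∀ n, ‖w n‖ ≤ C) (hvb : ∃ C : ℝ, ∀ n, ‖v n‖ ≤ C)
    (d : ℤ → ℂ) (hdb : ∃ C : ℝ, ∀ n, ‖d n‖ ≤ C)
    (T0 T1 X : Hl →L[ℂ] Hl)
    (hT0 : ∀ n : ℤ, T0 (eb n) = w n • eb (n + 1))
    (hT1 : ∀ n : ℤ, T1 (eb n) = v n • eb (n + 1))
    (hX : ∀ n : ℤ, X (eb n) = d n • eb n)
    (hXT : X.comp T1 ≠ T0.comp X)
    (hIrr0 : IsIrreducibleOp T0) (hIrr1 : IsIrreducibleOp T1)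
    (hlim : ∀ i j : ℤ, Tendsto
      (fun k : ℕ => ∏ m ∈ Finset.range (k + 1), ‖w (j + (m : ℤ))‖ / ‖v (i + (m : ℤ))‖)
      atTop (nhds 0)) :
    IsIrreducibleOp (blockT T0 T1 X) := by
  intro K hKc hTK hT'K
  haveI : CompleteSpace K := hKc.completeSpace_coe
  set T : H2 →L[ℂ] H2 := blockT T0 T1 X with hTdef
  set P : H2 →L[ℂ] H2 := K.subtypeL.comp (K.orthogonalProjectionOnto) with hPdef
  have hPsa : IsSelfAdjoint P := isSelfAdjoint_starProjection K
  have hPsym : ∀ a b : H2, ⟪P a, b⟫ = ⟪a, P b⟫ :=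
    fun a b => (ContinuousLinearMap.isSelfAdjoint_iff_isSymmetric.mp hPsa) a b
  have hPK : ∀ z : H2, P z ∈ K := fun z => (K.orthogonalProjectionOnto z).2
  have hPfix : ∀ z ∈ K, P z = z := fun z hz => (Submodule.starProjection_eq_self_iff (K := K)).mpr hz
  have hcomm : ∀ z, P (T z) = T (P z) := fun z => proj_comm K T hTK hT'K z
  set E2 : H2 ≃L[ℂ] Hl × Hl := WithLp.prodContinuousLinearEquiv 2 ℂ Hl Hl with hE2
  set ι0 : Hl →L[ℂ] H2 := (E2.symm.toContinuousLinearMap).comp (ContinuousLinearMap.inl ℂ Hl Hl)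
    with hι0
  set ι1 : Hl →L[ℂ] H2 := (E2.symm.toContinuousLinearMap).comp (ContinuousLinearMap.inr ℂ Hl Hl)
    with hι1
  set π0 : H2 →L[ℂ] Hl := (ContinuousLinearMap.fst ℂ Hl Hl).comp E2.toContinuousLinearMap
    with hπ0
  set π1 : H2 →L[ℂ] Hl := (ContinuousLinearMap.snd ℂ Hl Hl).comp E2.toContinuousLinearMap
    with hπ1
  set D : Hl →L[ℂ] Hl := X.comp T1 - T0.comp X with hDdef
  have hTfst : ∀ z : H2, π0 (T z) = T0 (π0 z) + D (π1 z) := fun z => rfl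
  have hTsnd : ∀ z : H2, π1 (T z) = T1 (π1 z) := fun z => rfl
  have h00 : ∀ x : Hl, π0 (ι0 x) = x := fun x => rfl
  have h10 : ∀ x : Hl, π1 (ι0 x) = 0 := fun x => rfl
  have h01 : ∀ x : Hl, π0 (ι1 x) = 0 := fun x => rfl
  have h11 : ∀ x : Hl, π1 (ι1 x) = x := fun x => rfl
  have hext2 : ∀ z z' : H2, π0 z = π0 z' → π1 z = π1 z' → z = z' := by
    intro z z' hz0 hz1
    apply E2.injective
    exact Prod.ext hz0 hz1
  have hsum : ∀ z : H2, ι0 (π0 z) + ι1 (π1 z) = z := by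
    intro z
    apply E2.injective
    apply Prod.ext <;> simp [hE2, hι0, hι1, hπ0, hπ1]
  have hin0 : ∀ (x : Hl) (z : H2), ⟪ι0 x, z⟫ = ⟪x, π0 z⟫ := by
    intro x z
    rw [WithLp.prod_inner_apply]
    simp [hι0, hπ0, hE2]
  have hin1 : ∀ (x : Hl) (z : H2), ⟪ι1 x, z⟫ = ⟪x, π1 z⟫ := by
    intro x z
    rw [WithLp.prod_inner_apply]
    simp [hι1, hπ1, hE2]
  have hin0' : ∀ (z : H2) (x : Hl), ⟪z, ι0 x⟫ = ⟪π0 z, x⟫ := by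
    intro z x
    rw [WithLp.prod_inner_apply]
    simp [hι0, hπ0, hE2]
  have hin1' : ∀ (z : H2) (x : Hl), ⟪z, ι1 x⟫ = ⟪π1 z, x⟫ := by
    intro z x
    rw [WithLp.prod_inner_apply]
    simp [hι1, hπ1, hE2]
  set A : Hl →L[ℂ] Hl := π0.comp (P.comp ι0) with hA
  set B : Hl →L[ℂ] Hl := π0.comp (P.comp ι1) with hB
  set B' : Hl →L[ℂ] Hl := π1.comp (P.comp ι0) with hB'
  set C : Hl →L[ℂ] Hl := π1.comp (P.comp ι1) with hC
  have hAx : ∀ x, A x = π0 (P (ι0 x)) := fun _ => rfl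
  have hBx : ∀ x, B x = π0 (P (ι1 x)) := fun _ => rfl
  have hB'x : ∀ x, B' x = π1 (P (ι0 x)) := fun _ => rfl
  have hCx : ∀ x, C x = π1 (P (ι1 x)) := fun _ => rfl
  have hTι0 : ∀ x : Hl, T (ι0 x) = ι0 (T0 x) := by
    intro x
    apply hext2
    · rw [hTfst, h00, h00, h10, map_zero, add_zero]
    · rw [hTsnd, h10, h10, map_zero]
  have hTι1 : ∀ y : Hl, T (ι1 y) = ι0 (D y) + ι1 (T1 y) := by
    intro y
    apply hext2
    · rw [hTfst, h01, h11, map_add, h00, h01, add_zero, map_zero, zero_add]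
    · rw [hTsnd, h11, map_add, h10, h11, zero_add]
  have hB'int : ∀ x, B' (T0 x) = T1 (B' x) := by
    intro x
    rw [hB'x, hB'x, ← hTι0, hcomm, hTsnd]
  have hB'0 : B' = 0 := intertwine_eq_zero w v hv0 T0 T1 hT0 hT1 hlim B' hB'int
  have hB'z : ∀ x, B' x = 0 := fun x => by rw [hB'0]; rfl
  have hBz : ∀ y, B y = 0 := by
    intro y
    have hxy : ∀ x : Hl, ⟪x, B y⟫ = 0 := by
      intro x
      rw [hBx, ← hin0, ← hPsym, hin1', ← hB'x, hB'z, inner_zero_left]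
    have h := hxy (B y)
    rwa [inner_self_eq_zero] at h
  have hPι0 : ∀ x, P (ι0 x) = ι0 (A x) := by
    intro x
    apply hext2
    · rw [h00, ← hAx]
    · rw [h10, ← hB'x, hB'z]
  have hPι1 : ∀ y, P (ι1 y) = ι1 (C y) := by
    intro y
    apply hext2
    · rw [h01, ← hBx, hBz]
    · rw [h11, ← hCx]
  have hAT0 : ∀ x, A (T0 x) = T0 (A x) := by
    intro x
    rw [hAx, ← hTι0, hcomm, hTfst, ← hAx, ← hB'x, hB'z, map_zero, add_zero]
  have hCT1 : ∀ y, C (T1 y) = T1 (C y) := by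
    intro y
    have h := congrArg (fun z : H2 => π1 z) (hcomm (ι1 y))
    rw [hTι1, map_add, hTsnd, ← hCx] at h
    rw [map_add, ← hB'x, hB'z, zero_add, ← hCx] at h
    exact h
  have hADC : ∀ y, A (D y) = D (C y) := by
    intro y
    have h := congrArg (fun z : H2 => π0 z) (hcomm (ι1 y))
    rw [hTι1, map_add, hTfst, ← hCx, ← hBx, hBz, map_zero, zero_add] at h
    rw [map_add, ← hAx, ← hBx, hBz, add_zero] at h
    exact h
  have hAsym : ∀ x x' : Hl, ⟪A x, x'⟫ = ⟪x, A x'⟫ := by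
    intro x x'
    rw [hAx, hAx, ← hin0' (P (ι0 x)) x', hPsym, hin0]
  have hCsym : ∀ y y' : Hl, ⟪C y, y'⟫ = ⟪y, C y'⟫ := by
    intro y y'
    rw [hCx, hCx, ← hin1' (P (ι1 y)) y', hPsym, hin1]
  have hAidem : ∀ x, A (A x) = A x := by
    intro x
    rw [hAx (A x), ← hPι0 x, hPfix _ (hPK _), ← hAx]
  have hCidem : ∀ y, C (C y) = C y := by
    intro y
    rw [hCx (C y), ← hPι1 y, hPfix _ (hPK _), ← hCx]
  have hdA := selfadj_idem_comm_dichotomy T0 hIrr0 A hAsym hAidem hAT0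
  have hdC := selfadj_idem_comm_dichotomy T1 hIrr1 C hCsym hCidem hCT1
  have hDy : ∀ y, D y = X (T1 y) - T0 (X y) := fun y => rfl
  rcases hdA with hA0 | hA1 <;> rcases hdC with hC0 | hC1
  · left
    rw [Submodule.eq_bot_iff]
    intro x hx
    have h1 : P x = x := hPfix x hx
    have h2 : P x = 0 := by
      rw [← hsum x, map_add, hPι0, hPι1, hA0, hC0, map_zero, map_zero, add_zero]
    rw [← h1, h2]
  · exfalso
    apply hXT
    have hD0 : ∀ y, D y = 0 := by
      intro y
      have h := hADC y
      rw [hA0, hC1] at h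
      exact h.symm
    refine ContinuousLinearMap.ext fun y => ?_
    have h := hD0 y
    rw [hDy] at h
    simpa using sub_eq_zero.mp h
  · exfalso
    apply hXT
    have hD0 : ∀ y, D y = 0 := by
      intro y
      have h := hADC y
      rw [hA1, hC0, map_zero] at h
      exact h
    refine ContinuousLinearMap.ext fun y => ?_
    have h := hD0 y
    rw [hDy] at h
    simpa using sub_eq_zero.mp h
  · right
    rw [Submodule.eq_top_iff']
    intro x
    have h2 : P x = x := by
      rw [← hsum x, map_add, hPι0, hPι1, hA1, hC1, hsum]
    rw [← h2]
    exact hPK x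
end
end
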